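/- For all positive integers k, r, every positive integer n, and every primitive n-th root of unity ζ_n in ℂ, there exists a rational number c such that z_n({k}^r; ζ_n) = c · (1-ζ_n)^{kr}. -/

import Mathlib

open Finset

/-- The set of tuples `(m_1,...,m_r)` with `n > m_1 > m_2 > ... > m_r > 0`. -/
def msets (n r : ℕ) : Finset (Fin r → Fin n) :=
  Finset.univ.filter fun m =>
    (∀ i j : Fin r, i < j → m j < m i) ∧ ∀ i, 0 < (m i : ℕ)

/-- The set of tuples `(m_1,...,m_r)` with `n > m_1 ≥ m_2 ≥ ... ≥ m_r > 0`. -/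
def msetsStar (n r : ℕ) : Finset (Fin r → Fin n) :=
  Finset.univ.filter fun m =>
    (∀ i j : Fin r, i ≤ j → m j ≤ m i) ∧ ∀ i, 0 < (m i : ℕ)

/-- The finite multiple harmonic q-series
`z_n(k_1,…,k_r; q) = Σ_{n > m_1 > … > m_r > 0} Π_i q^{(k_i-1)m_i}/[m_i]_q^{k_i}`,
where `[m]_q = (1-q^m)/(1-q)`. -/
noncomputable def z (n : ℕ) {r : ℕ} (k : Fin r → ℕ) (q : ℂ) : ℂ :=
  ∑ m ∈ msets n r,
    ∏ i, q ^ ((k i - 1) * (m i : ℕ)) / ((1 - q ^ (m i : ℕ)) / (1 - q)) ^ (k i)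

/-- The star version `z*_n(k; q)`, summed over `n > m_1 ≥ … ≥ m_r > 0`. -/
noncomputable def zstar (n : ℕ) {r : ℕ} (k : Fin r → ℕ) (q : ℂ) : ℂ :=
  ∑ m ∈ msetsStar n r,
    ∏ i, q ^ ((k i - 1) * (m i : ℕ)) / ((1 - q ^ (m i : ℕ)) / (1 - q)) ^ (k i)

/-- The modified value `z̄_n(k;q) = (1-q)^{-wt(k)} z_n(k;q)`. -/
noncomputable def zbar (n : ℕ) {r : ℕ} (k : Fin r → ℕ) (q : ℂ) : ℂ :=
  (1 - q)⁻¹ ^ (∑ i, k i) * z n k q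

/-- The modified star value `z̄*_n(k;q) = (1-q)^{-wt(k)} z*_n(k;q)`. -/
noncomputable def zstarbar (n : ℕ) {r : ℕ} (k : Fin r → ℕ) (q : ℂ) : ℂ :=
  (1 - q)⁻¹ ^ (∑ i, k i) * zstar n k q

/-- `I(k,r,s)`: the set of indices (tuples of positive integers) of weight `k`,
depth `r` and height `s`. -/
def indexSet3 (k r s : ℕ) : Finset (Fin r → ℕ) :=
  (Finset.Nat.antidiagonalTuple r k).filter fun a =>
    (∀ i, 1 ≤ a i) ∧ (Finset.univ.filter fun i => 2 ≤ a i).card = s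

/-- `I(k,r)`: the set of indices of weight `k` and depth `r`. -/
def indexSet2 (k r : ℕ) : Finset (Fin r → ℕ) :=
  (Finset.Nat.antidiagonalTuple r k).filter fun a => ∀ i, 1 ≤ a i

/-- The one-variable finite q-multiple polylogarithm
`L_{k_1,…,k_r}^{(n)}(t;q) = Σ_{n > m_1 > … > m_r > 0} t^{m_1} / Π_i (1-q^{m_i})^{k_i}`,
with `L_∅(t) = 1`. -/
noncomputable def Lpoly (n : ℕ) {r : ℕ} (k : Fin r → ℕ) (q t : ℂ) : ℂ :=
  ∑ m ∈ msets n r,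
    ∏ i : Fin r, (if i.val = 0 then t ^ (m i : ℕ) else 1) / (1 - q ^ (m i : ℕ)) ^ (k i)

/-- The star version `L*_{k_1,…,k_r}^{(n)}(t;q)`, summed over `n > m_1 ≥ … ≥ m_r > 0`. -/
noncomputable def LpolyStar (n : ℕ) {r : ℕ} (k : Fin r → ℕ) (q t : ℂ) : ℂ :=
  ∑ m ∈ msetsStar n r,
    ∏ i : Fin r, (if i.val = 0 then t ^ (m i : ℕ) else 1) / (1 - q ^ (m i : ℕ)) ^ (k i)

noncomputable def Ssum {F : Type*} [Field F] (n k r : ℕ) (ζ : F) : F :=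
  ∑ A ∈ (Finset.Ioo 0 n).powersetCard r,
    ∏ m ∈ A, ζ ^ ((k - 1) * m) * ((1 - ζ ^ m)⁻¹) ^ k

theorem Ssum_map {F F' : Type*} [Field F] [Field F'] (φ : F →+* F') (n k r : ℕ) (ζ : F) :
    φ (Ssum n k r ζ) = Ssum n k r (φ ζ) := by
  simp [Ssum, map_sum, map_prod, map_mul, map_pow, map_inv₀, map_sub]

theorem Ssum_pow {F : Type*} [Field F] {n : ℕ} (hn : 0 < n) {ζ : F} (hζ : ζ ^ n = 1)
    (k r : ℕ) {a : ℕ} (ha : a.Coprime n) :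
    Ssum n k r (ζ ^ a) = Ssum n k r (ζ) := by
  set g : ℕ → ℕ := fun m => a * m % n with hg
  have hpow : ∀ x : ℕ, ζ ^ x = ζ ^ (x % n) := by
    intro x
    conv_lhs => rw [← Nat.div_add_mod x n]
    rw [pow_add, pow_mul, hζ, one_pow, one_mul]
  have emod : ∀ x y : ℕ, x ≡ y [MOD n] → ζ ^ x = ζ ^ y := by
    intro x y hxy
    rw [hpow x, hpow y, hxy]
  have hgf : ∀ m : ℕ, (ζ ^ a) ^ ((k - 1) * m) * ((1 - (ζ ^ a) ^ m)⁻¹) ^ k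
      = ζ ^ ((k - 1) * g m) * ((1 - ζ ^ g m)⁻¹) ^ k := by
    intro m
    rw [← pow_mul, ← pow_mul]
    have e1 : ζ ^ (a * ((k-1) * m)) = ζ ^ ((k - 1) * g m) := by
      apply emod
      have h1 : g m ≡ a * m [MOD n] := Nat.mod_modEq (a * m) n
      calc a * ((k-1) * m) = (k-1) * (a * m) := by ring
        _ ≡ (k-1) * g m [MOD n] := (Nat.ModEq.mul_left (k-1) h1).symm
    have e2 : ζ ^ (a * m) = ζ ^ g m := by
      rw [hpow (a*m)]
    rw [e1, e2]
  have hg_mem : ∀ m ∈ Finset.Ioo 0 n, g m ∈ Finset.Ioo 0 n := by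
    intro m hm
    rw [Finset.mem_Ioo] at hm ⊢
    refine ⟨?_, Nat.mod_lt _ hn⟩
    rcases Nat.eq_zero_or_pos (g m) with h | h
    case inr => exact h
    · exfalso
      have hdvd : n ∣ a * m := Nat.dvd_of_mod_eq_zero h
      have : n ∣ m := (Nat.Coprime.dvd_of_dvd_mul_left (ha.symm) hdvd)
      have := Nat.le_of_dvd hm.1 this
      omega
  have hg_inj : Set.InjOn g (Finset.Ioo 0 n) := by
    intro x hx y hy hxy
    rw [Finset.coe_Ioo, Set.mem_Ioo] at hx hy
    have : a * x ≡ a * y [MOD n] := by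
      unfold Nat.ModEq
      simpa [hg] using hxy
    have := (Nat.ModEq.cancel_left_of_coprime (by simpa [Nat.Coprime] using ha.symm) this)
    unfold Nat.ModEq at this
    rwa [Nat.mod_eq_of_lt hx.2, Nat.mod_eq_of_lt hy.2] at this
  set P := (Finset.Ioo 0 n).powersetCard r with hP
  have hmemP : ∀ A ∈ P, A ⊆ Finset.Ioo 0 n ∧ A.card = r := by
    intro A hA; rw [hP, Finset.mem_powersetCard] at hA; exact hA
  have key : ∀ A ∈ P, A.image g ∈ P := by
    intro A hA
    obtain ⟨hsub, hcard⟩ := hmemP A hA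
    rw [hP, Finset.mem_powersetCard]
    constructor
    · intro x hx
      obtain ⟨y, hy, rfl⟩ := Finset.mem_image.mp hx
      exact hg_mem y (hsub hy)
    · rw [Finset.card_image_of_injOn (hg_inj.mono (by exact_mod_cast hsub)), hcard]
  have hinj2 : Set.InjOn (fun A => Finset.image g A) P := by
    intro A hA B hB hAB
    replace hA : A ∈ P := Finset.mem_coe.mp hA
    replace hB : B ∈ P := Finset.mem_coe.mp hB
    change Finset.image g A = Finset.image g B at hAB
    obtain ⟨hsubA, -⟩ := hmemP A hA
    obtain ⟨hsubB, -⟩ := hmemP B hB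
    ext x
    constructor
    · intro hx
      have : g x ∈ Finset.image g B := by rw [← hAB]; exact Finset.mem_image_of_mem g hx
      obtain ⟨y, hy, hyx⟩ := Finset.mem_image.mp this
      have := hg_inj (Finset.mem_coe.mpr (hsubB hy)) (Finset.mem_coe.mpr (hsubA hx)) hyx
      rwa [← this]
    · intro hx
      have : g x ∈ Finset.image g A := by rw [hAB]; exact Finset.mem_image_of_mem g hx
      obtain ⟨y, hy, hyx⟩ := Finset.mem_image.mp this
      have := hg_inj (Finset.mem_coe.mpr (hsubA hy)) (Finset.mem_coe.mpr (hsubB hx)) hyx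
      rwa [← this]
  have hsurjimg : P.image (fun A => Finset.image g A) = P := by
    apply Finset.eq_of_subset_of_card_le
    · intro B hB
      obtain ⟨A, hA, rfl⟩ := Finset.mem_image.mp hB
      exact key A hA
    · rw [Finset.card_image_of_injOn hinj2]
  calc Ssum n k r (ζ ^ a)
      = ∑ A ∈ P, ∏ m ∈ A, ζ ^ ((k - 1) * g m) * ((1 - ζ ^ g m)⁻¹) ^ k := by
        refine Finset.sum_congr rfl fun A hA => Finset.prod_congr rfl fun m hm => hgf m
    _ = ∑ A ∈ P, ∏ m' ∈ A.image g, ζ ^ ((k - 1) * m') * ((1 - ζ ^ m')⁻¹) ^ k := by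
        refine Finset.sum_congr rfl fun A hA => ?_
        rw [Finset.prod_image]
        intro x hx y hy hxy
        exact hg_inj (by exact_mod_cast (hmemP A hA).1 hx) (by exact_mod_cast (hmemP A hA).1 hy) hxy
    _ = Ssum n k r ζ := by
        apply Finset.sum_bij (i := fun A (hA : A ∈ P) => A.image g) key
          (fun A hA B hB h => hinj2 hA hB h)
        · intro B hB
          rw [← hsurjimg] at hB
          obtain ⟨A, hA, rfl⟩ := Finset.mem_image.mp hB
          exact ⟨A, hA, rfl⟩
        · intro A hA; rfl

theorem z_eq_Ssum (n k r : ℕ) (hn : 2 ≤ n) (ζ : ℂ) (hζ : IsPrimitiveRoot ζ n) :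
    z n (fun _ : Fin r => k) ζ = (1 - ζ) ^ (k * r) * Ssum n k r ζ := by
  have h1 : (1 : ℂ) - ζ ≠ 0 := sub_ne_zero.mpr (Ne.symm (hζ.ne_one hn))
  have h2 : ∀ m : ℕ, 0 < m → m < n → (1 : ℂ) - ζ ^ m ≠ 0 := fun m hm hmn =>
    sub_ne_zero.mpr (Ne.symm (hζ.pow_ne_one_of_pos_of_lt hm.ne' hmn))
  rw [z, Ssum, Finset.mul_sum]
  apply Finset.sum_bij (i := fun (m : Fin r → Fin n) (_ : m ∈ msets n r) =>
    Finset.image (fun i => (m i : ℕ)) Finset.univ)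
  · -- maps into powersetCard
    intro m hm
    rw [msets, Finset.mem_filter] at hm
    obtain ⟨-, hlt, hpos⟩ := hm
    rw [Finset.mem_powersetCard]
    constructor
    · intro x hx
      obtain ⟨i, -, rfl⟩ := Finset.mem_image.mp hx
      exact Finset.mem_Ioo.mpr ⟨hpos i, (m i).2⟩
    · rw [Finset.card_image_of_injective _ (fun i j hij => ?_), Finset.card_univ,
        Fintype.card_fin]
      by_contra hne
      rcases lt_or_gt_of_ne hne with h | h
      · exact absurd hij (Nat.ne_of_gt (hlt i j h))
      · exact absurd hij.symm (Nat.ne_of_gt (hlt j i h))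
  · -- injective
    intro m hm m' hm' himg
    rw [msets, Finset.mem_filter] at hm hm'
    obtain ⟨-, hlt, hpos⟩ := hm
    obtain ⟨-, hlt', hpos'⟩ := hm'
    set A := Finset.image (fun i => ((m i : ℕ))) Finset.univ with hA
    have hcard : A.card = r := by
      rw [hA, Finset.card_image_of_injective _ (fun i j hij => ?_), Finset.card_univ,
        Fintype.card_fin]
      by_contra hne
      rcases lt_or_gt_of_ne hne with h | h
      · exact absurd hij (Nat.ne_of_gt (hlt i j h))
      · exact absurd hij.symm (Nat.ne_of_gt (hlt j i h))
    have key : ∀ (f : Fin r → Fin n), (∀ i j : Fin r, i < j → f j < f i) →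
        Finset.image (fun i => ((f i : ℕ))) Finset.univ = A →
        (fun j : Fin r => ((f j.rev : ℕ))) = A.orderEmbOfFin hcard := by
      intro f hf hfA
      apply Finset.orderEmbOfFin_unique hcard
      · intro x
        rw [← hfA]
        exact Finset.mem_image_of_mem _ (Finset.mem_univ _)
      · intro i j hij
        have : j.rev < i.rev := by
          rw [Fin.lt_def] at hij ⊢
          simp [Fin.val_rev]
          omega
        exact hf j.rev i.rev this
    have e1 := key m hlt rfl
    have e2 := key m' hlt' himg.symm
    have : (fun j : Fin r => ((m j.rev : ℕ))) = fun j : Fin r => ((m' j.rev : ℕ)) := by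
      rw [e1, e2]
    funext i
    have := congrFun this i.rev
    simp only [Fin.rev_rev] at this
    exact Fin.val_injective this
  · -- surjective
    intro B hB
    rw [Finset.mem_powersetCard] at hB
    obtain ⟨hsub, hcard⟩ := hB
    have hmemB : ∀ j : Fin r, B.orderEmbOfFin hcard j ∈ Finset.Ioo 0 n :=
      fun j => hsub (Finset.orderEmbOfFin_mem B hcard j)
    refine ⟨fun i => ⟨B.orderEmbOfFin hcard i.rev,
      (Finset.mem_Ioo.mp (hmemB i.rev)).2⟩, ?_, ?_⟩
    · rw [msets, Finset.mem_filter]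
      refine ⟨Finset.mem_univ _, fun i j hij => ?_, fun i => (Finset.mem_Ioo.mp (hmemB i.rev)).1⟩
      show (B.orderEmbOfFin hcard j.rev : ℕ) < B.orderEmbOfFin hcard i.rev
      apply (B.orderEmbOfFin hcard).strictMono
      rw [Fin.lt_def] at hij ⊢
      simp [Fin.val_rev]
      omega
    · -- image equals B
      apply Finset.coe_injective
      push_cast
      rw [Set.image_univ]
      have heq : (fun i : Fin r => ((B.orderEmbOfFin hcard) i.rev)) =
          (B.orderEmbOfFin hcard) ∘ Fin.rev := rfl
      rw [heq, Set.range_comp, Set.range_eq_univ.mpr Fin.rev_surjective,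
        Set.image_univ, Finset.range_orderEmbOfFin]
  · -- values
    intro m hm
    rw [msets, Finset.mem_filter] at hm
    obtain ⟨-, hlt, hpos⟩ := hm
    have hinj : Function.Injective (fun i => ((m i : ℕ))) := by
      intro i j hij
      by_contra hne
      rcases lt_or_gt_of_ne hne with h | h
      · exact absurd hij (Nat.ne_of_gt (hlt i j h))
      · exact absurd hij.symm (Nat.ne_of_gt (hlt j i h))
    rw [Finset.prod_image (fun i _ j _ hij => hinj hij)]
    have : ∀ i : Fin r,
        ζ ^ ((k - 1) * (m i : ℕ)) / ((1 - ζ ^ (m i : ℕ)) / (1 - ζ)) ^ k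
        = (1 - ζ) ^ k * (ζ ^ ((k - 1) * (m i : ℕ)) * ((1 - ζ ^ (m i : ℕ))⁻¹) ^ k) := by
      intro i
      have hz := h2 (m i) (hpos i) (m i).2
      rw [div_pow, div_div_eq_mul_div]
      ring
    rw [Finset.prod_congr rfl fun i _ => this i, Finset.prod_mul_distrib,
      Finset.prod_const, Finset.card_univ, Fintype.card_fin, ← pow_mul]

theorem Ssum_rational (n k r : ℕ) (hn : 2 ≤ n) (ζ : ℂ) (hζ : IsPrimitiveRoot ζ n) :
    ∃ c : ℚ, Ssum n k r ζ = (c : ℂ) := by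
  haveI : NeZero n := ⟨by omega⟩
  set n' : ℕ+ := ⟨n, by omega⟩ with hn'
  set K := CyclotomicField n' ℚ with hK
  haveI : IsCyclotomicExtension {(n' : ℕ)} ℚ K := CyclotomicField.isCyclotomicExtension n' ℚ
  haveI : IsGalois ℚ K := IsCyclotomicExtension.isGalois {(n' : ℕ)} ℚ K
  haveI : FiniteDimensional ℚ K := IsCyclotomicExtension.finiteDimensional {(n' : ℕ)} ℚ K
  set ζ' : K := IsCyclotomicExtension.zeta n' ℚ K with hζ'def
  have hζ' : IsPrimitiveRoot ζ' n := IsCyclotomicExtension.zeta_spec n' ℚ K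
  set s : K := Ssum n k r ζ' with hs
  have hfix : ∀ γ : K ≃ₐ[ℚ] K, γ s = s := by
    intro γ
    have h1 : γ s = Ssum n k r (γ ζ') := Ssum_map (γ : K →+* K) n k r ζ'
    have hprim : IsPrimitiveRoot (γ ζ') n := hζ'.map_of_injective γ.injective
    obtain ⟨b, hb, hbcop, hbe⟩ := (hζ'.isPrimitiveRoot_iff).mp hprim
    rw [h1, ← hbe, Ssum_pow (by omega) hζ'.pow_eq_one k r hbcop]
  have hbotF : IntermediateField.fixedField (⊤ : Subgroup (K ≃ₐ[ℚ] K)) = ⊥ :=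
    OrderIso.map_bot (IsGalois.intermediateFieldEquivSubgroup).symm
  have hsmem : s ∈ IntermediateField.fixedField (⊤ : Subgroup (K ≃ₐ[ℚ] K)) := by
    intro g
    exact hfix g
  rw [hbotF, IntermediateField.mem_bot] at hsmem
  obtain ⟨c, hc⟩ := hsmem
  haveI : Algebra.IsAlgebraic ℚ K := Algebra.IsAlgebraic.of_finite ℚ K
  let φ : K →ₐ[ℚ] ℂ := IsAlgClosed.lift
  have hξ : IsPrimitiveRoot (φ ζ') n := hζ'.map_of_injective φ.injective
  obtain ⟨b, hb, hbcop, hbe⟩ := (hξ.isPrimitiveRoot_iff).mp hζ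
  refine ⟨c, ?_⟩
  calc Ssum n k r ζ = Ssum n k r ((φ ζ') ^ b) := by rw [hbe]
    _ = Ssum n k r (φ ζ') := Ssum_pow (by omega) hξ.pow_eq_one k r hbcop
    _ = φ s := (Ssum_map (φ : K →+* ℂ) n k r ζ').symm
    _ = φ (algebraMap ℚ K c) := by rw [hc]
    _ = (c : ℂ) := by rw [φ.commutes c]; exact eq_ratCast (algebraMap ℚ ℂ) c

/-- `z_n({k}^r; ζ_n) ∈ (1-ζ_n)^{kr}·ℚ`. -/
theorem zn_kkk_rational (k r : ℕ) (hk : 1 ≤ k) (hr : 1 ≤ r)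
    (n : ℕ) (hn : 0 < n) (ζ : ℂ) (hζ : IsPrimitiveRoot ζ n) :
    ∃ c : ℚ, z n (fun _ : Fin r => k) ζ = (c : ℂ) * (1 - ζ) ^ (k * r) := by
  by_cases hn1 : n = 1
  · subst hn1
    have hζ1 : ζ = 1 := by simpa using hζ.pow_eq_one
    refine ⟨0, ?_⟩
    have hempty : msets 1 r = ∅ := by
      rw [Finset.eq_empty_iff_forall_notMem]
      intro m hm
      rw [msets, Finset.mem_filter] at hm
      have h1 := hm.2.2 ⟨0, hr⟩
      have h2 := (m ⟨0, hr⟩).2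
      omega
    rw [z, hempty]
    simp [hζ1]
  · have hn2 : 2 ≤ n := by omega
    obtain ⟨c, hc⟩ := Ssum_rational n k r hn2 ζ hζ
    exact ⟨c, by rw [z_eq_Ssum n k r hn2 ζ hζ, hc]; ring⟩
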